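/- Let G_ℓ(n) = ∑_{k≥ℓ} R_k(n) be the number of runs of 1's of length at least ℓ among the first n tosses. Then for every r ≥ 1 and n ≥ 0, E[C(G_ℓ(n), r)] = p^{ℓr} q^{r-1} [C(n+1-ℓr, r) - p·C(n-ℓr, r)], where C(a,b) is the binomial coefficient (taken as 0 when b > a or a < 0). -/

import Mathlib

open scoped Classical
open Finset Filter

noncomputable section

/-- Weight (probability) of a Boolean string of length `n` under i.i.d. Bernoulli(p). -/
def wt (p : ℝ) {n : ℕ} (x : Fin n → Bool) : ℝ :=
  ∏ i, (if x i then p else 1 - p)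

/-- Extend a finite string by `false`. -/
def pad {n : ℕ} (x : Fin n → Bool) : ℕ → Bool :=
  fun i => if h : i < n then x ⟨i, h⟩ else false

/-- A maximal run of 1's of length exactly `ℓ` starts at position `i` (0-indexed)
within the first `n` positions. -/
def IsRunAt (x : ℕ → Bool) (n i ℓ : ℕ) : Prop :=
  1 ≤ ℓ ∧ i + ℓ ≤ n ∧ (∀ k < ℓ, x (i + k) = true) ∧
    (i = 0 ∨ x (i - 1) = false) ∧ (i + ℓ = n ∨ x (i + ℓ) = false)

/-- `R_ℓ(n)`: the number of maximal runs of 1's of length exactly `ℓ` in the first `n` tosses. -/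
def runCount (x : ℕ → Bool) (n ℓ : ℕ) : ℕ :=
  ((Finset.range n).filter (fun i => IsRunAt x n i ℓ)).card

/-- `G_ℓ(n)`: the number of maximal runs of 1's of length at least `ℓ` in the first `n` tosses. -/
def excCount (x : ℕ → Bool) (n ℓ : ℕ) : ℕ :=
  ∑ k ∈ Finset.Icc ℓ n, runCount x n k

/-- `L(n)`: the length of the longest run of 1's in the first `n` tosses. -/
def longestRun (x : ℕ → Bool) (n : ℕ) : ℕ :=
  (Finset.range (n + 1)).sup
    (fun ℓ => if ∃ i, i + ℓ ≤ n ∧ ∀ k < ℓ, x (i + k) = true then ℓ else 0)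

/-- Expectation of a (real) functional of `n` i.i.d. Bernoulli(p) tosses. -/
def Ex (p : ℝ) (n : ℕ) (f : (ℕ → Bool) → ℝ) : ℝ :=
  ∑ x : Fin n → Bool, wt p x * f (pad x)

/-- Expectation of a complex functional of `n` i.i.d. Bernoulli(p) tosses. -/
def ExC (p : ℝ) (n : ℕ) (f : (ℕ → Bool) → ℂ) : ℂ :=
  ∑ x : Fin n → Bool, (wt p x : ℂ) * f (pad x)

/-- Probability of an event depending on the first `n` i.i.d. Bernoulli(p) tosses. -/
def Pr (p : ℝ) (n : ℕ) (A : Set (ℕ → Bool)) : ℝ :=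
  ∑ x : Fin n → Bool, if pad x ∈ A then wt p x else 0

/-- Binomial coefficient with integer upper argument, vanishing for negative upper argument. -/
def C (a : ℤ) (b : ℕ) : ℝ :=
  if a < 0 then 0 else (a.toNat).choose b

/-- `i` starts a maximal run of length at least `ℓ`. -/
def startP (x : ℕ → Bool) (n ℓ i : ℕ) : Prop :=
  i + ℓ ≤ n ∧ (∀ k < ℓ, x (i + k) = true) ∧ (i = 0 ∨ x (i - 1) = false)

def scount (x : ℕ → Bool) (n ℓ : ℕ) : ℕ :=
  ((Finset.range n).filter (startP x n ℓ)).card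

lemma excCount_eq_scount (x : ℕ → Bool) (n ℓ : ℕ) (hℓ : 1 ≤ ℓ) :
    excCount x n ℓ = scount x n ℓ := by
  unfold excCount runCount scount
  simp only [Finset.card_filter]
  rw [Finset.sum_comm]
  refine Finset.sum_congr rfl fun i _ => ?_
  by_cases hQ : startP x n ℓ i
  · -- there is a unique k
    set P' : ℕ → Prop := fun k => i + k ≤ n ∧ ∀ j < k, x (i + j) = true with hP'
    set K := Nat.findGreatest P' n with hK
    have hPl : P' ℓ := ⟨hQ.1, hQ.2.1⟩
    have hln : ℓ ≤ n := le_trans (Nat.le_add_left _ _) hQ.1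
    have hlK : ℓ ≤ K := Nat.le_findGreatest hln hPl
    have hKn : K ≤ n := Nat.findGreatest_le n
    have hPK : P' K := Nat.findGreatest_spec hln hPl
    have hrun : IsRunAt x n i K := by
      refine ⟨le_trans hℓ hlK, hPK.1, hPK.2, hQ.2.2, ?_⟩
      by_contra hcon
      push_neg at hcon
      obtain ⟨h1, h2⟩ := hcon
      have hKn' : i + K < n := lt_of_le_of_ne hPK.1 h1
      have hP1 : P' (K + 1) := by
        refine ⟨by omega, fun j hj => ?_⟩
        rcases Nat.lt_or_ge j K with h | h
        · exact hPK.2 j h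
        · have : j = K := by omega
          subst this
          simpa using h2
      exact Nat.findGreatest_is_greatest (Nat.lt_succ_self K) (by omega) hP1
    have huniq : ∀ k, k ∈ Finset.Icc ℓ n → IsRunAt x n i k → k = K := by
      intro k hk hrk
      rcases Nat.lt_trichotomy k K with h | h | h
      · exfalso
        have hfk : x (i + k) = false := by
          rcases hrk.2.2.2.2 with h' | h'
          · exfalso; have := hPK.1; omega
          · exact h'
        have ht := hPK.2 k h
        rw [ht] at hfk
        simp at hfk
      · exact h
      · exfalso
        have : ¬ P' k := Nat.findGreatest_is_greatest h (by
          have := hrk.2.1; omega)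
        exact this ⟨hrk.2.1, hrk.2.2.1⟩
    have : ∀ k ∈ Finset.Icc ℓ n, (if IsRunAt x n i k then (1:ℕ) else 0)
        = if k = K then 1 else 0 := by
      intro k hk
      by_cases h : IsRunAt x n i k
      · rw [if_pos h, if_pos (huniq k hk h)]
      · rw [if_neg h, if_neg]
        intro hkK; subst hkK; exact h hrun
    rw [Finset.sum_congr rfl this, Finset.sum_ite_eq' (Finset.Icc ℓ n) K (fun _ => (1:ℕ)),
      if_pos (Finset.mem_Icc.mpr ⟨hlK, hKn⟩), if_pos hQ]
  · rw [if_neg hQ]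
    refine Finset.sum_eq_zero fun k hk => if_neg fun hrk => hQ ?_
    have hlk : ℓ ≤ k := (Finset.mem_Icc.mp hk).1
    exact ⟨by have := hrk.2.1; omega, fun j hj => hrk.2.2.1 j (lt_of_lt_of_le hj hlk), hrk.2.2.2.1⟩

lemma scount_congr (x y : ℕ → Bool) (n ℓ : ℕ) (h : ∀ i < n, x i = y i) :
    scount x n ℓ = scount y n ℓ := by
  unfold scount
  congr 1
  refine Finset.filter_congr fun i hi => ?_
  rw [Finset.mem_range] at hi
  unfold startP
  constructor <;> rintro ⟨h1, h2, h3⟩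
  · refine ⟨h1, fun k hk => ?_, ?_⟩
    · rw [← h (i+k) (by omega), h2 k hk]
    · rcases h3 with h3 | h3
      · exact Or.inl h3
      · exact Or.inr (by rw [← h (i-1) (by omega), h3])
  · refine ⟨h1, fun k hk => ?_, ?_⟩
    · rw [h (i+k) (by omega), h2 k hk]
    · rcases h3 with h3 | h3
      · exact Or.inl h3
      · exact Or.inr (by rw [h (i-1) (by omega), h3])

lemma scount_of_lt (x : ℕ → Bool) (n ℓ : ℕ) (h : n < ℓ) : scount x n ℓ = 0 := by
  unfold scount
  rw [Finset.card_eq_zero, Finset.filter_eq_empty_iff]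
  intro i _ hQ
  have := hQ.1; omega

lemma scount_succ (x : ℕ → Bool) (n ℓ : ℕ) (hℓ : 1 ≤ ℓ) (hn : ℓ ≤ n + 1) :
    scount x (n + 1) ℓ = scount x n ℓ +
      (if (∀ k < ℓ, x (n + 1 - ℓ + k) = true) ∧ (n + 1 - ℓ = 0 ∨ x (n - ℓ) = false)
        then 1 else 0) := by
  unfold scount
  simp only [Finset.card_filter]
  have hmem : n + 1 - ℓ ∈ Finset.range (n + 1) := Finset.mem_range.mpr (by omega)
  have key : ∀ i ∈ Finset.range (n + 1),
      (if startP x (n+1) ℓ i then (1:ℕ) else 0) =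
      (if startP x n ℓ i then (1:ℕ) else 0) +
      (if i = n + 1 - ℓ then
        (if (∀ k < ℓ, x (n + 1 - ℓ + k) = true) ∧ (n + 1 - ℓ = 0 ∨ x (n - ℓ) = false)
          then 1 else 0) else 0) := by
    intro i _
    by_cases hQ : startP x n ℓ i
    · rw [if_pos hQ, if_pos ⟨by have := hQ.1; omega, hQ.2.1, hQ.2.2⟩, if_neg, add_zero]
      intro hi
      have := hQ.1; omega
    · rw [if_neg hQ, zero_add]
      by_cases hQ' : startP x (n+1) ℓ i
      · rw [if_pos hQ']
        have hie : i = n + 1 - ℓ := by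
          rcases Nat.lt_or_ge (i + ℓ) (n+1) with h | h
          · exact absurd ⟨by omega, hQ'.2.1, hQ'.2.2⟩ hQ
          · have := hQ'.1; omega
        rw [if_pos hie, if_pos]
        subst hie
        refine ⟨hQ'.2.1, ?_⟩
        rcases hQ'.2.2 with h | h
        · exact Or.inl h
        · rcases Nat.eq_or_lt_of_le hn with h' | h'
          · exact Or.inl (by omega)
          · exact Or.inr (by rwa [show n + 1 - ℓ - 1 = n - ℓ by omega] at h)
      · rw [if_neg hQ']
        by_cases hie : i = n + 1 - ℓ
        · rw [if_pos hie]
          subst hie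
          rw [if_neg]
          rintro ⟨h1, h2⟩
          refine hQ' ⟨by omega, h1, ?_⟩
          rcases h2 with h | h
          · exact Or.inl h
          · exact Or.inr (by rwa [show n + 1 - ℓ - 1 = n - ℓ by omega])
        · rw [if_neg hie]
  rw [Finset.sum_congr rfl key, Finset.sum_add_distrib, Finset.sum_ite_eq' _ _ _, if_pos hmem]
  congr 1
  rw [Finset.sum_range_succ, if_neg, add_zero]
  intro hQ
  have := hQ.1; omega

lemma scount_cut (x : ℕ → Bool) (m ℓ : ℕ) (hℓ : 1 ≤ ℓ) (hm : x m = false) :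
    scount x (m + ℓ) ℓ = scount x m ℓ := by
  unfold scount
  congr 1
  ext i
  simp only [Finset.mem_filter, Finset.mem_range]
  constructor
  · rintro ⟨hi, h1, h2, h3⟩
    have him : i + ℓ ≤ m := by
      by_contra hcon
      push_neg at hcon
      have hile : i ≤ m := by omega
      have : x m = true := by
        have := h2 (m - i) (by omega)
        rwa [show i + (m - i) = m by omega] at this
      rw [hm] at this; simp at this
    exact ⟨by omega, him, h2, h3⟩
  · rintro ⟨hi, h1, h2, h3⟩
    exact ⟨by omega, by omega, h2, h3⟩

lemma scount_full (x : ℕ → Bool) (ℓ : ℕ) (hℓ : 1 ≤ ℓ) :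
    scount x ℓ ℓ = if (∀ k < ℓ, x k = true) then 1 else 0 := by
  unfold scount
  by_cases h : ∀ k < ℓ, x k = true
  · rw [if_pos h]
    rw [Finset.card_eq_one]
    refine ⟨0, ?_⟩
    ext i
    simp only [Finset.mem_filter, Finset.mem_range, Finset.mem_singleton]
    constructor
    · rintro ⟨hi, h1, h2, h3⟩; omega
    · rintro rfl
      exact ⟨by omega, ⟨by omega, by simpa using h, Or.inl rfl⟩⟩
  · rw [if_neg h, Finset.card_eq_zero, Finset.filter_eq_empty_iff]
    intro i _ hQ
    have hi0 : i = 0 := by have := hQ.1; omega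
    subst hi0
    exact h (by simpa using hQ.2.1)

/-- Gluing equivalence. -/
def glueEquiv (m k : ℕ) : ((Fin m → Bool) × (Fin k → Bool)) ≃ (Fin (m + k) → Bool) :=
  (Equiv.sumArrowEquivProdArrow (Fin m) (Fin k) Bool).symm.trans
    (Equiv.arrowCongr finSumFinEquiv (Equiv.refl Bool))

lemma glueEquiv_castAdd (m k : ℕ) (y : Fin m → Bool) (w : Fin k → Bool) (i : Fin m) :
    glueEquiv m k (y, w) (Fin.castAdd k i) = y i := by
  simp [glueEquiv, Equiv.arrowCongr, Equiv.sumArrowEquivProdArrow]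

lemma glueEquiv_natAdd (m k : ℕ) (y : Fin m → Bool) (w : Fin k → Bool) (j : Fin k) :
    glueEquiv m k (y, w) (Fin.natAdd m j) = w j := by
  simp [glueEquiv, Equiv.arrowCongr, Equiv.sumArrowEquivProdArrow]

lemma wt_glue (p : ℝ) (m k : ℕ) (y : Fin m → Bool) (w : Fin k → Bool) :
    wt p (glueEquiv m k (y, w)) = wt p y * wt p w := by
  unfold wt
  rw [Fin.prod_univ_add]
  congr 1
  · exact Finset.prod_congr rfl fun i _ => by rw [glueEquiv_castAdd]
  · exact Finset.prod_congr rfl fun j _ => by rw [glueEquiv_natAdd]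

lemma pad_glue_lt (m k : ℕ) (y : Fin m → Bool) (w : Fin k → Bool) (i : ℕ) (hi : i < m) :
    pad (glueEquiv m k (y, w)) i = y ⟨i, hi⟩ := by
  have h1 : i < m + k := by omega
  have : (⟨i, h1⟩ : Fin (m + k)) = Fin.castAdd k ⟨i, hi⟩ := rfl
  rw [pad, dif_pos h1, this, glueEquiv_castAdd]

lemma pad_glue_ge (m k : ℕ) (y : Fin m → Bool) (w : Fin k → Bool) (j : ℕ) (hj : j < k) :
    pad (glueEquiv m k (y, w)) (m + j) = w ⟨j, hj⟩ := by
  have h1 : m + j < m + k := by omega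
  have : (⟨m + j, h1⟩ : Fin (m + k)) = Fin.natAdd m ⟨j, hj⟩ := rfl
  rw [pad, dif_pos h1, this, glueEquiv_natAdd]

/-- Core splitting lemma: conditioning on a fixed suffix pattern. -/
lemma split_sum (p : ℝ) (m k : ℕ) (z : Fin k → Bool) (g : (ℕ → Bool) → ℝ)
    (hg : ∀ a b : ℕ → Bool, (∀ i < m, a i = b i) → g a = g b) :
    ∑ x : Fin (m + k) → Bool,
        wt p x * (if (∀ j : Fin k, pad x (m + j.val) = z j) then g (pad x) else 0)
      = wt p z * ∑ y : Fin m → Bool, wt p y * g (pad y) := by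
  rw [← Equiv.sum_comp (glueEquiv m k)
    (fun x => wt p x * (if (∀ j : Fin k, pad x (m + j.val) = z j) then g (pad x) else 0)),
    Fintype.sum_prod_type]
  have step : ∀ y : Fin m → Bool, ∀ w : Fin k → Bool,
      wt p (glueEquiv m k (y, w)) *
        (if (∀ j : Fin k, pad (glueEquiv m k (y, w)) (m + j.val) = z j)
          then g (pad (glueEquiv m k (y, w))) else 0)
      = wt p y * (if w = z then wt p w * g (pad y) else 0) := by
    intro y w
    have hcond : (∀ j : Fin k, pad (glueEquiv m k (y, w)) (m + j.val) = z j) ↔ w = z := by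
      constructor
      · intro h
        funext j
        have := h j
        rwa [pad_glue_ge m k y w j.val j.isLt, Fin.eta] at this
      · rintro rfl j
        rw [pad_glue_ge m k y w j.val j.isLt, Fin.eta]
    have hpad : g (pad (glueEquiv m k (y, w))) = g (pad y) := by
      refine hg _ _ fun i hi => ?_
      rw [pad_glue_lt m k y w i hi, pad, dif_pos hi]
    rw [wt_glue, hpad]
    by_cases h : w = z
    · rw [if_pos (hcond.mpr h), if_pos h]; ring
    · rw [if_neg (fun hc => h (hcond.mp hc)), if_neg h, mul_zero, mul_zero]
  calc (∑ y : Fin m → Bool, ∑ w : Fin k → Bool, wt p (glueEquiv m k (y, w)) *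
        (if (∀ j : Fin k, pad (glueEquiv m k (y, w)) (m + j.val) = z j)
          then g (pad (glueEquiv m k (y, w))) else 0))
      = ∑ y : Fin m → Bool, ∑ w : Fin k → Bool,
          wt p y * (if w = z then wt p w * g (pad y) else 0) := by
        exact Finset.sum_congr rfl fun y _ => Finset.sum_congr rfl fun w _ => step y w
    _ = wt p z * ∑ y : Fin m → Bool, wt p y * g (pad y) := by
        rw [Finset.mul_sum]
        refine Finset.sum_congr rfl fun y _ => ?_
        rw [← Finset.mul_sum, Finset.sum_ite_eq' Finset.univ z
          (fun w => wt p w * g (pad y)), if_pos (Finset.mem_univ z)]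
        ring

lemma wt_total (p : ℝ) (n : ℕ) : ∑ x : Fin n → Bool, wt p x = 1 := by
  induction n with
  | zero =>
    simp [wt]
  | succ n ih =>
    rw [← Equiv.sum_comp (glueEquiv n 1) (wt p), Fintype.sum_prod_type]
    calc ∑ y : Fin n → Bool, ∑ w : Fin 1 → Bool, wt p (glueEquiv n 1 (y, w))
        = ∑ y : Fin n → Bool, wt p y * ∑ w : Fin 1 → Bool, wt p w := by
          refine Finset.sum_congr rfl fun y _ => ?_
          rw [Finset.mul_sum]
          exact Finset.sum_congr rfl fun w _ => wt_glue p n 1 y w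
      _ = 1 := by
          have h1 : ∑ w : Fin 1 → Bool, wt p w = 1 := by
            rw [show ((Finset.univ : Finset (Fin 1 → Bool))) =
              {fun _ => true, fun _ => false} by decide]
            rw [Finset.sum_insert (by decide), Finset.sum_singleton]
            simp [wt]
          rw [h1]
          simp only [mul_one]
          exact ih

lemma Ex_congr' (p : ℝ) (n : ℕ) (f g : (ℕ → Bool) → ℝ) (h : ∀ y, f y = g y) :
    Ex p n f = Ex p n g := by
  have : f = g := funext h
  rw [this]

lemma Ex_const (p : ℝ) (n : ℕ) (c : ℝ) : Ex p n (fun _ => c) = c := by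
  unfold Ex
  rw [← Finset.sum_mul, wt_total, one_mul]

lemma Ex_add (p : ℝ) (n : ℕ) (f g : (ℕ → Bool) → ℝ) :
    Ex p n (fun y => f y + g y) = Ex p n f + Ex p n g := by
  unfold Ex
  rw [← Finset.sum_add_distrib]
  exact Finset.sum_congr rfl fun x _ => by ring

lemma Ex_pattern (p : ℝ) (m k : ℕ) (z : Fin k → Bool) (g : (ℕ → Bool) → ℝ)
    (hg : ∀ a b : ℕ → Bool, (∀ i < m, a i = b i) → g a = g b) :
    Ex p (m + k) (fun y => if (∀ j : Fin k, y (m + j.val) = z j) then g y else 0)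
      = wt p z * Ex p m g := by
  unfold Ex
  exact split_sum p m k z g hg

lemma Ex_drop (p : ℝ) (m k : ℕ) (g : (ℕ → Bool) → ℝ)
    (hg : ∀ a b : ℕ → Bool, (∀ i < m, a i = b i) → g a = g b) :
    Ex p (m + k) g = Ex p m g := by
  unfold Ex
  have collapse : ∀ x : Fin (m + k) → Bool,
      wt p x * g (pad x) = ∑ z : Fin k → Bool,
        wt p x * (if (∀ j : Fin k, pad x (m + j.val) = z j) then g (pad x) else 0) := by
    intro x
    have h1 : ∀ z : Fin k → Bool,
        wt p x * (if (∀ j : Fin k, pad x (m + j.val) = z j) then g (pad x) else 0)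
        = if z = (fun j => pad x (m + j.val)) then wt p x * g (pad x) else 0 := by
      intro z
      have : (∀ j : Fin k, pad x (m + j.val) = z j) ↔ z = (fun j => pad x (m + j.val)) := by
        rw [funext_iff]
        exact ⟨fun h j => (h j).symm, fun h j => (h j).symm⟩
      by_cases h : z = (fun j => pad x (m + j.val))
      · rw [if_pos (this.mpr h), if_pos h]
      · rw [if_neg (fun hc => h (this.mp hc)), if_neg h, mul_zero]
    rw [Finset.sum_congr rfl fun z _ => h1 z,
      Finset.sum_ite_eq' Finset.univ _ (fun _ => wt p x * g (pad x)),
      if_pos (Finset.mem_univ _)]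
  rw [Finset.sum_congr rfl fun x _ => collapse x, Finset.sum_comm]
  rw [Finset.sum_congr rfl fun z (_ : z ∈ Finset.univ) => split_sum p m k z g hg]
  rw [← Finset.sum_mul, wt_total, one_mul]

lemma C_nonpos {a : ℤ} {r : ℕ} (ha : a ≤ 0) (hr : 1 ≤ r) : C a r = 0 := by
  unfold C
  split_ifs with h
  · rfl
  · have h0 : a.toNat = 0 := by omega
    rw [h0, Nat.choose_eq_zero_of_lt (by omega)]
    norm_num

lemma C_zero {a : ℤ} (ha : 0 ≤ a) : C a 0 = 1 := by
  unfold C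
  rw [if_neg (by omega), Nat.choose_zero_right]
  norm_num

lemma C_pascal (a : ℤ) (r : ℕ) : C (a + 1) (r + 1) = C a (r + 1) + C a r := by
  unfold C
  rcases lt_trichotomy a (-1) with h | h | h
  · rw [if_pos (by omega), if_pos (by omega), if_pos (by omega)]
    ring
  · subst h
    rw [if_neg (by omega), if_pos (by omega), if_pos (by omega)]
    norm_num
  · rw [if_neg (by omega), if_neg (by omega), if_neg (by omega)]
    have h1 : (a + 1).toNat = a.toNat + 1 := by omega
    rw [h1, Nat.choose_succ_succ]
    push_cast
    ring

lemma rhs_zero (p : ℝ) {ℓ r n : ℕ} (hr : 1 ≤ r) (h : (n : ℤ) + 1 - ℓ * r ≤ 0) :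
    p ^ (ℓ * r) * (1 - p) ^ (r - 1) *
      (C ((n : ℤ) + 1 - ℓ * r) r - p * C ((n : ℤ) - ℓ * r) r) = 0 := by
  rw [C_nonpos h hr, C_nonpos (by omega) hr]
  ring

lemma key (p : ℝ) (ℓ : ℕ) (hℓ : 1 ≤ ℓ) :
    ∀ r : ℕ, 1 ≤ r → ∀ n : ℕ,
      Ex p n (fun x => ((scount x n ℓ).choose r : ℝ)) =
        p ^ (ℓ * r) * (1 - p) ^ (r - 1) *
          (C ((n : ℤ) + 1 - ℓ * r) r - p * C ((n : ℤ) - ℓ * r) r) := by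
  intro r
  induction r with
  | zero => intro h; exact absurd h (by omega)
  | succ s ihs =>
    intro _ n
    have hLge : (ℓ : ℤ) ≤ (ℓ : ℤ) * ((s : ℤ) + 1) := by nlinarith [Int.ofNat_nonneg ℓ, Int.ofNat_nonneg s]
    induction n with
    | zero =>
      rw [Ex_congr' p 0 _ (fun _ => (0:ℝ)) (fun y => by
        rw [scount_of_lt y 0 ℓ (by omega)]; simp), Ex_const]
      rw [rhs_zero (ℓ := ℓ) (r := s+1) (n := 0) p (by omega) (by push_cast; omega)]
    | succ n ihn =>
      by_cases hc1 : n + 1 < ℓ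
      · rw [Ex_congr' p (n+1) _ (fun _ => (0:ℝ)) (fun y => by
          rw [scount_of_lt y (n+1) ℓ hc1]; simp), Ex_const]
        rw [rhs_zero (ℓ := ℓ) (r := s+1) (n := n+1) p (by omega)
          (by push_cast; nlinarith [Int.ofNat_nonneg ℓ, Int.ofNat_nonneg s, Int.ofNat_nonneg n])]
      · by_cases hc2 : n + 1 = ℓ
        · -- window exactly ℓ
          subst hc2
          have hiff : ∀ y : ℕ → Bool,
              (∀ k < n + 1, y k = true) ↔
              (∀ j : Fin (n+1), y (0 + j.val) = (fun _ : Fin (n+1) => true) j) := by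
            intro y
            constructor
            · intro h j; simpa using h j.val j.isLt
            · intro h k hk; simpa using h ⟨k, hk⟩
          have h1 : Ex p (n+1) (fun x => ((scount x (n+1) (n+1)).choose (s+1) : ℝ))
              = Ex p (0 + (n+1)) (fun y =>
                  if (∀ j : Fin (n+1), y (0 + j.val) = (fun _ : Fin (n+1) => true) j)
                  then ((Nat.choose 1 (s+1) : ℕ) : ℝ) else 0) := by
            rw [show 0 + (n+1) = n+1 from Nat.zero_add _]
            refine Ex_congr' p (n+1) _ _ fun y => ?_
            rw [scount_full y (n+1) (by omega)]
            by_cases h : ∀ k < n + 1, y k = true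
            · rw [if_pos h, if_pos ((hiff y).mp h)]
            · rw [if_neg h, if_neg (fun hc => h ((hiff y).mpr hc))]
              simp
          rw [h1, Ex_pattern p 0 (n+1) (fun _ => true)
            (fun _ => ((Nat.choose 1 (s+1) : ℕ) : ℝ)) (fun a b _ => rfl), Ex_const]
          have hwt : wt p (fun _ : Fin (n+1) => true) = p ^ (n+1) := by
            simp [wt]
          rw [hwt]
          rcases Nat.eq_zero_or_pos s with hs | hs
          · subst hs
            have e1 : C (((n+1:ℕ) : ℤ) + 1 - ((n+1:ℕ):ℤ) * ((0+1:ℕ):ℤ)) (0+1) = 1 := by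
              rw [show (((n+1:ℕ) : ℤ) + 1 - ((n+1:ℕ):ℤ) * ((0+1:ℕ):ℤ)) = 1 by push_cast; ring]
              norm_num [C]
            have e2 : C (((n+1:ℕ) : ℤ) - ((n+1:ℕ):ℤ) * ((0+1:ℕ):ℤ)) (0+1) = 0 := by
              rw [show (((n+1:ℕ) : ℤ) - ((n+1:ℕ):ℤ) * ((0+1:ℕ):ℤ)) = 0 by push_cast; ring]
              exact C_nonpos le_rfl le_rfl
            push_cast at e1 e2 ⊢
            ring_nf at e1 e2 ⊢
            rw [e1, e2]
            norm_num
          · rw [Nat.choose_eq_zero_of_lt (by omega)]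
            rw [rhs_zero (ℓ := n+1) (r := s+1) (n := n+1) p (by omega)
              (by push_cast; nlinarith [Int.ofNat_nonneg s, Int.ofNat_nonneg n])]
            norm_num
        · -- main case : ℓ ≤ n
          have hℓn : ℓ ≤ n := by omega
          set m := n - ℓ with hm
          have hmn : m + ℓ = n := by omega
          -- Step A : pointwise decomposition
          have stepA : ∀ y : ℕ → Bool,
              ((scount y (n+1) ℓ).choose (s+1) : ℝ)
              = ((scount y n ℓ).choose (s+1) : ℝ) +
                (if (∀ k < ℓ, y (n + 1 - ℓ + k) = true) ∧ (n + 1 - ℓ = 0 ∨ y (n - ℓ) = false)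
                  then ((scount y m ℓ).choose s : ℝ) else 0) := by
            intro y
            rw [scount_succ y n ℓ hℓ (by omega)]
            by_cases hΔ : (∀ k < ℓ, y (n + 1 - ℓ + k) = true) ∧ (n + 1 - ℓ = 0 ∨ y (n - ℓ) = false)
            · rw [if_pos hΔ, if_pos hΔ]
              have hym : y m = false := by
                rcases hΔ.2 with h | h
                · exact absurd h (by omega)
                · exact h
              have hcut : scount y n ℓ = scount y m ℓ := by
                have h2 := scount_cut y m ℓ hℓ hym
                rwa [hmn] at h2
              rw [hcut, Nat.choose_succ_succ]
              push_cast
              ring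
            · rw [if_neg hΔ, if_neg hΔ, add_zero, add_zero]
          have expand : Ex p (n+1) (fun y => ((scount y (n+1) ℓ).choose (s+1) : ℝ))
              = Ex p (n+1) (fun y => ((scount y n ℓ).choose (s+1) : ℝ))
              + Ex p (n+1) (fun y =>
                  if (∀ k < ℓ, y (n + 1 - ℓ + k) = true) ∧ (n + 1 - ℓ = 0 ∨ y (n - ℓ) = false)
                  then ((scount y m ℓ).choose s : ℝ) else 0) := by
            rw [← Ex_add]
            exact Ex_congr' p (n+1) _ _ stepA
          -- Step C : drop the last coordinate
          have stepC : Ex p (n+1) (fun y => ((scount y n ℓ).choose (s+1) : ℝ))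
              = Ex p n (fun y => ((scount y n ℓ).choose (s+1) : ℝ)) :=
            Ex_drop p n 1 _ (fun a b hab =>
              congrArg (fun t : ℕ => ((Nat.choose t (s+1) : ℕ) : ℝ)) (scount_congr a b n ℓ hab))
          -- Step D : factor out the forced pattern
          set z : Fin (ℓ+1) → Bool := Fin.cons false (fun _ => true) with hz
          have hiff : ∀ y : ℕ → Bool,
              ((∀ k < ℓ, y (n + 1 - ℓ + k) = true) ∧ (n + 1 - ℓ = 0 ∨ y (n - ℓ) = false))
              ↔ (∀ j : Fin (ℓ+1), y (m + j.val) = z j) := by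
            intro y
            constructor
            · rintro ⟨h1, h2⟩ j
              have hym : y m = false := by
                rcases h2 with h | h
                · exact absurd h (by omega)
                · exact h
              refine Fin.cases ?_ (fun j' => ?_) j
              · simpa [hz] using hym
              · have h3 := h1 j'.val j'.isLt
                rw [show n + 1 - ℓ + j'.val = m + (j'.succ).val by
                  simp [Fin.val_succ]; omega] at h3
                simpa [hz] using h3
            · intro h
              constructor
              · intro k hk
                have h3 := h (Fin.succ ⟨k, hk⟩)
                rw [show m + (Fin.succ (⟨k, hk⟩ : Fin ℓ)).val = n + 1 - ℓ + k by
                  simp [Fin.val_succ]; omega] at h3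
                rw [hz, Fin.cons_succ] at h3
                simpa using h3
              · right
                have h3 := h 0
                simpa [hz, show m + ((0 : Fin (ℓ+1)) : ℕ) = n - ℓ by simp [hm]] using h3
          have hwtz : wt p z = (1 - p) * p ^ ℓ := by
            unfold wt
            rw [Fin.prod_univ_succ]
            simp [hz]
          have stepD : Ex p (n+1) (fun y =>
                  if (∀ k < ℓ, y (n + 1 - ℓ + k) = true) ∧ (n + 1 - ℓ = 0 ∨ y (n - ℓ) = false)
                  then ((scount y m ℓ).choose s : ℝ) else 0)
              = (1 - p) * p ^ ℓ * Ex p m (fun y => ((scount y m ℓ).choose s : ℝ)) := by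
            have hEp := Ex_pattern p m (ℓ+1) z (fun y => ((scount y m ℓ).choose s : ℝ))
              (fun a b hab =>
                congrArg (fun t : ℕ => ((Nat.choose t s : ℕ) : ℝ)) (scount_congr a b m ℓ hab))
            rw [show m + (ℓ+1) = n + 1 by omega] at hEp
            rw [← hwtz, ← hEp]
            refine Ex_congr' p (n+1) _ _ fun y => ?_
            by_cases h : (∀ k < ℓ, y (n + 1 - ℓ + k) = true) ∧ (n + 1 - ℓ = 0 ∨ y (n - ℓ) = false)
            · rw [if_pos h, if_pos ((hiff y).mp h)]
            · rw [if_neg h, if_neg (fun hc => h ((hiff y).mpr hc))]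
          -- Step E : evaluate the lower-order expectation
          have stepE : (1 - p) * p ^ ℓ * Ex p m (fun y => ((scount y m ℓ).choose s : ℝ))
              = p ^ (ℓ * (s+1)) * (1 - p) ^ s *
                (C ((n : ℤ) + 1 - ℓ * (s+1)) s - p * C ((n : ℤ) - ℓ * (s+1)) s) := by
            rcases Nat.eq_zero_or_pos s with hs | hs
            · subst hs
              rw [Ex_congr' p m (fun y => ((scount y m ℓ).choose 0 : ℝ)) (fun _ => (1:ℝ))
                (fun y => by simp), Ex_const]
              rw [C_zero (by push_cast; omega), C_zero (by push_cast; omega)]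
              rw [show ℓ * 1 = ℓ by ring]
              ring
            · obtain ⟨t, rfl⟩ : ∃ t, s = t + 1 := ⟨s - 1, by omega⟩
              rw [ihs (by omega) m]
              have hcast : (m : ℤ) = (n : ℤ) - ℓ := by omega
              rw [hcast]
              simp only [Nat.add_sub_cancel]
              rw [show ℓ * (t+1+1) = ℓ * (t+1) + ℓ by ring, pow_add, pow_succ]
              ring_nf
          rw [expand, stepC, ihn, stepD, stepE]
          -- final Pascal algebra
          have hp1 := C_pascal ((n : ℤ) + 1 - ℓ * (s+1)) s
          have hp2 := C_pascal ((n : ℤ) - ℓ * (s+1)) s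
          rw [show ((n:ℤ) + 1 - ℓ * (s+1)) + 1 = ((n:ℤ)+1) + 1 - ℓ * (s+1) by ring] at hp1
          rw [show ((n:ℤ) - ℓ * (s+1)) + 1 = ((n:ℤ)+1) - ℓ * (s+1) by ring] at hp2
          simp only [Nat.add_sub_cancel]
          push_cast
          push_cast at hp1 hp2
          ring_nf at hp1 hp2 ⊢
          linear_combination (- (p ^ (ℓ * (s+1)) * (1-p) ^ s)) * hp1
            + (p * p ^ (ℓ * (s+1)) * (1-p) ^ s) * hp2

/-- binomial moments of the number of runs of length at least `ℓ`. -/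
theorem stmt6 (p : ℝ) (hp : 0 < p) (hp1 : p < 1) (ℓ : ℕ) (hℓ : 1 ≤ ℓ)
    (r : ℕ) (hr : 1 ≤ r) (n : ℕ) :
    Ex p n (fun x => ((excCount x n ℓ).choose r : ℝ)) =
      p ^ (ℓ * r) * (1 - p) ^ (r - 1) *
        (C ((n : ℤ) + 1 - ℓ * r) r - p * C ((n : ℤ) - ℓ * r) r) := by
  rw [Ex_congr' p n _ _ (fun x => by rw [excCount_eq_scount x n ℓ hℓ])]
  exact key p ℓ hℓ r hr n
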